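/- arXiv:0808.1713 — 3 statements merged into one kernel-verified Lean document; each statement's English description precedes it below -/
import Mathlib

section
/- For all integers k ≥ 3 and n ≥ 2k-1, there exists a k-uniform hypergraph H on n vertices such that every set of k-1 vertices has at least ⌈n/(2k-2)⌉ - 1 neighbours, but H does not contain a Hamilton cycle (i.e., there is no cyclic ordering of the vertices such that every pair of consecutive vertices lies in a common edge of H consisting of k consecutive vertices). -/
/-- `v : ℕ → Fin n` is a loose... a Hamilton cycle of the `k`-graph `H` if `v` is `n`-periodic,
its restriction to `Fin n` is a bijection (i.e. a cyclic ordering of the vertices), and every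
pair of consecutive vertices lies in an edge of `H` consisting of `k` consecutive vertices. -/
def IsHamiltonCycle (n k : ℕ) (H : Finset (Finset (Fin n))) (v : ℕ → Fin n) : Prop :=
  (∀ i, v (i + n) = v i) ∧ Function.Bijective (fun i : Fin n => v i) ∧
  ∀ i : ℕ, ∃ a : ℕ, ((Finset.range k).image fun j => v (a + j)) ∈ H ∧
    v i ∈ ((Finset.range k).image fun j => v (a + j)) ∧
    v (i + 1) ∈ ((Finset.range k).image fun j => v (a + j))

/-- For all `k ≥ 3` and `n ≥ 2k-1` there is a `k`-uniform hypergraph on `n` vertices in which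
every `(k-1)`-set of vertices has at least `⌈n/(2k-2)⌉ - 1` neighbours, but which has no
Hamilton cycle. -/
theorem stmt_0 (k n : ℕ) (hk : 3 ≤ k) (hn : 2 * k - 1 ≤ n) :
    ∃ H : Finset (Finset (Fin n)),
      (∀ e ∈ H, e.card = k) ∧
      (∀ T : Finset (Fin n), T.card = k - 1 →
        (n + (2 * k - 2) - 1) / (2 * k - 2) - 1 ≤
          (Finset.univ.filter fun x => insert x T ∈ H).card) ∧
      ¬ ∃ v : ℕ → Fin n, IsHamiltonCycle n k H v := by
  classical
  have hn0 : 0 < n := by omega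
  set d : ℕ := 2 * k - 2 with hd
  set m : ℕ := (n + d - 1) / d - 1 with hm
  have hd4 : 4 ≤ d := by omega
  have hmd : m * d ≤ n - 1 := by
    have h1 : (n + d - 1) / d * d ≤ n + d - 1 := Nat.div_mul_le_self _ _
    have h2 : m * d = (n + d - 1) / d * d - d := by
      rw [hm, Nat.sub_mul, one_mul]
    omega
  have hm4 : 4 * m ≤ n - 1 := by
    have : m * 4 ≤ m * d := Nat.mul_le_mul_left m hd4
    omega
  set H : Finset (Finset (Fin n)) := (Finset.univ : Finset (Finset (Fin n))).filter
      (fun e => e.card = k ∧ ∃ x : Fin n, x ∈ e ∧ (x : ℕ) < m) with hH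
  have hmemH : ∀ e : Finset (Fin n), e ∈ H ↔ e.card = k ∧ ∃ x : Fin n, x ∈ e ∧ (x : ℕ) < m := by
    intro e
    rw [hH, Finset.mem_filter]
    simp
  refine ⟨H, ?_, ?_, ?_⟩
  · intro e he
    exact ((hmemH e).mp he).1
  · intro T hT
    rcases Classical.em (∃ y : Fin n, y ∈ T ∧ (y : ℕ) < m) with ⟨y, hyT, hym⟩ | hno
    · have hsub : Tᶜ ⊆ Finset.univ.filter (fun x => insert x T ∈ H) := by
        intro x hx
        rw [Finset.mem_compl] at hx
        rw [Finset.mem_filter]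
        refine ⟨Finset.mem_univ _, ?_⟩
        rw [hmemH]
        refine ⟨?_, y, Finset.mem_insert_of_mem hyT, hym⟩
        rw [Finset.card_insert_of_notMem hx, hT]
        omega
      have hcc : Tᶜ.card = n - (k - 1) := by
        rw [Finset.card_compl, hT, Fintype.card_fin]
      have := Finset.card_le_card hsub
      omega
    · have hbound : m ≤ (Finset.univ.filter (fun x => insert x T ∈ H)).card := by
        have hmn : m < n := by omega
        have := Finset.card_le_card_of_injOn
          (f := fun j : ℕ => (⟨j % n, Nat.mod_lt _ hn0⟩ : Fin n))
          (s := Finset.range m)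
          (t := Finset.univ.filter (fun x => insert x T ∈ H))
          ?_ ?_
        · simpa using this
        · intro j hj
          rw [Finset.mem_coe, Finset.mem_range] at hj
          have hjn : j % n = j := Nat.mod_eq_of_lt (by omega)
          have hxm : ((⟨j % n, Nat.mod_lt _ hn0⟩ : Fin n) : ℕ) < m := by
            simpa [hjn] using hj
          have hxT : (⟨j % n, Nat.mod_lt _ hn0⟩ : Fin n) ∉ T := fun h => hno ⟨_, h, hxm⟩
          rw [Finset.mem_coe, Finset.mem_filter]
          refine ⟨Finset.mem_univ _, ?_⟩
          rw [hmemH]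
          refine ⟨?_, _, Finset.mem_insert_self _ _, hxm⟩
          rw [Finset.card_insert_of_notMem hxT, hT]
          omega
        · intro j hj j' hj' h
          rw [Finset.mem_coe, Finset.mem_range] at hj hj'
          have := congrArg Fin.val h
          simpa [Nat.mod_eq_of_lt (show j < n by omega),
            Nat.mod_eq_of_lt (show j' < n by omega)] using this
      omega
  · rintro ⟨v, hper, hbij, hwin⟩
    have hvmod : ∀ s, v s = v (s % n) := by
      intro s
      induction s using Nat.strong_induction_on with
      | _ s ih =>
        rcases Nat.lt_or_ge s n with h | h
        · rw [Nat.mod_eq_of_lt h]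
        · have hs : s = (s - n) + n := by omega
          rw [hs, hper (s - n), ih (s - n) (by omega), Nat.add_mod_right]
    have hinj : ∀ s t, v s = v t → s % n = t % n := by
      intro s t h
      have h1 : v (s % n) = v (t % n) := by rw [← hvmod, ← hvmod]; exact h
      have h2 := hbij.1 (a₁ := ⟨s % n, Nat.mod_lt _ hn0⟩) (a₂ := ⟨t % n, Nat.mod_lt _ hn0⟩) h1
      exact congrArg Fin.val h2
    have key : ∀ i : ℕ, ∃ p : Fin n, ∃ t : ℕ, (v p : ℕ) < m ∧ t < d ∧
        (i + (k - 1)) % n = ((p : ℕ) + t) % n := by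
      intro i
      obtain ⟨a, hE, hvi, hvi1⟩ := hwin i
      rw [hmemH] at hE
      obtain ⟨-, x, hxE, hxm⟩ := hE
      obtain ⟨j1, hj1k, hj1⟩ := Finset.mem_image.mp hvi
      obtain ⟨j2, hj2k, hj2⟩ := Finset.mem_image.mp hvi1
      obtain ⟨j3, hj3k, hj3⟩ := Finset.mem_image.mp hxE
      rw [Finset.mem_range] at hj1k hj2k hj3k
      have hkn : k < n := by omega
      have e1 : a + j1 ≡ i [MOD n] := hinj _ _ hj1
      have e2 : a + j2 ≡ i + 1 [MOD n] := hinj _ _ hj2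
      have e3 : a + (j1 + 1) ≡ i + 1 [MOD n] := by
        rw [← Nat.add_assoc]; exact e1.add_right 1
      have e4 : j1 + 1 ≡ j2 [MOD n] := Nat.ModEq.add_left_cancel' a (e3.trans e2.symm)
      have e5 : j1 + 1 = j2 := by
        have := e4
        unfold Nat.ModEq at this
        rwa [Nat.mod_eq_of_lt (by omega), Nat.mod_eq_of_lt (by omega)] at this
      refine ⟨⟨(a + j3) % n, Nat.mod_lt _ hn0⟩, j1 + (k - 1) - j3, ?_, by omega, ?_⟩
      · show (v ((a + j3) % n) : ℕ) < m
        rw [← hvmod, hj3]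
        exact hxm
      · show (i + (k - 1)) % n = ((a + j3) % n + (j1 + (k - 1) - j3)) % n
        rw [Nat.mod_add_mod]
        have h6 : a + j3 + (j1 + (k - 1) - j3) = a + j1 + (k - 1) := by omega
        rw [h6]
        exact (e1.add_right (k - 1)).symm
    choose p t h1 h2 h3 using key
    set P : Finset (Fin n) := Finset.univ.filter (fun q : Fin n => (v q : ℕ) < m) with hP
    have hPm : P.card ≤ m := by
      have := Finset.card_le_card_of_injOn (f := fun q : Fin n => (v q : ℕ))
        (s := P) (t := Finset.range m) ?_ ?_
      · simpa using this
      · intro q hq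
        rw [hP, Finset.mem_coe, Finset.mem_filter] at hq
        exact Finset.mem_range.mpr hq.2
      · intro q _ q' _ h
        exact hbij.1 (Fin.val_injective h)
    have hcount : (Finset.range n).card ≤ (P ×ˢ Finset.range d).card := by
      apply Finset.card_le_card_of_injOn (f := fun i => (p i, t i))
      · intro i _
        rw [Finset.mem_coe, Finset.mem_product, hP, Finset.mem_filter]
        exact ⟨⟨Finset.mem_univ _, h1 i⟩, Finset.mem_range.mpr (h2 i)⟩
      · intro i hi i' hi' h
        rw [Finset.mem_coe, Finset.mem_range] at hi hi'
        have hp : p i = p i' := congrArg Prod.fst h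
        have ht : t i = t i' := congrArg Prod.snd h
        have e1 : (i + (k - 1)) % n = (i' + (k - 1)) % n := by
          rw [h3 i, h3 i', hp, ht]
        have e2 : i ≡ i' [MOD n] := Nat.ModEq.add_right_cancel' (k - 1) e1
        unfold Nat.ModEq at e2
        rwa [Nat.mod_eq_of_lt hi, Nat.mod_eq_of_lt hi'] at e2
    rw [Finset.card_range, Finset.card_product, Finset.card_range] at hcount
    have : P.card * d ≤ m * d := Nat.mul_le_mul_right d hPm
    omega
end

section
/- Let k ≥ 2 and let ℓ, a_1, ..., a_k be integers with 0 ≤ a_i < ℓ/2 for all i and ℓ = a_1 + ... + a_k. Then for any s, t ∈ [k] there exists a string of length ℓ over the alphabet {x_1, ..., x_k} such that: (1) no two consecutive characters are equal; (2) the first character is not x_s and the final character is not x_t; (3) the character x_i occurs exactly a_i times, for each i. -/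
lemma key_lemma (k : ℕ) : ∀ m : ℕ, 1 ≤ m → ∀ (b : Fin k → ℕ) (p q : Fin k),
    (∑ i, b i = m) →
    (∀ i, 2 * b i + (if i = p then 1 else 0) + (if i = q then 1 else 0) ≤ m + 1) →
    ∃ L : List (Fin k), L.length = m ∧ L.Chain' (· ≠ ·) ∧
      (∀ x ∈ L.head?, x ≠ p) ∧ (∀ x ∈ L.getLast?, x ≠ q) ∧
      ∀ i, L.count i = b i := by
  intro m
  induction m with
  | zero => omega
  | succ n IH =>
    intro _ b p q hsum hC
    -- find u : u ≠ p, b u ≥ 1, and ∀ i ≠ u, 2 * b i + χq i ≤ n + 1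
    have pair_bound : ∀ u i : Fin k, u ≠ i → b u + b i ≤ n + 1 := by
      intro u i hui
      have hsub : ({u, i} : Finset (Fin k)) ⊆ Finset.univ := Finset.subset_univ _
      have := Finset.sum_le_sum_of_subset (f := b) hsub
      rwa [Finset.sum_pair hui, hsum] at this
    obtain ⟨u, hup, hub, hkey⟩ : ∃ u, u ≠ p ∧ 1 ≤ b u ∧
        ∀ i, i ≠ u → 2 * b i + (if i = q then 1 else 0) ≤ n + 1 := by
      by_cases hcrit : ∃ u, u ≠ p ∧ 2 * b u + (if u = q then 1 else 0) = n + 2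
      · obtain ⟨u, hup, hu⟩ := hcrit
        refine ⟨u, hup, by split_ifs at hu <;> omega, ?_⟩
        intro i hiu
        by_cases hip : i = p
        · have := hC i
          rw [if_pos hip] at this
          split_ifs at this ⊢ <;> omega
        · have hle := hC i
          rw [if_neg hip] at hle
          rcases Nat.lt_or_ge (2 * b i + (if i = q then 1 else 0)) (n + 2) with h | h
          · omega
          · exfalso
            have hpb := pair_bound u i (Ne.symm hiu)
            have : ¬(u = q ∧ i = q) := by rintro ⟨rfl, rfl⟩; exact hiu rfl
            split_ifs at hu h this <;> omega
      · push_neg at hcrit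
        have hex : ∃ u, u ≠ p ∧ 1 ≤ b u := by
          by_contra hno
          push_neg at hno
          have : ∑ i, b i = b p := by
            apply Finset.sum_eq_single p
            · intro i _ hip
              have := hno i hip
              omega
            · intro h; exact absurd (Finset.mem_univ p) h
          have h2 := hC p
          rw [if_pos rfl] at h2
          split_ifs at h2 <;> omega
        obtain ⟨u, hup, hub⟩ := hex
        refine ⟨u, hup, hub, ?_⟩
        intro i hiu
        by_cases hip : i = p
        · have := hC i
          rw [if_pos hip] at this
          split_ifs at this ⊢ <;> omega
        · have h1 := hC i
          have h2 := hcrit i hip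
          rw [if_neg hip] at h1
          omega
    -- base case n = 0
    rcases Nat.eq_zero_or_pos n with rfl | hn
    · refine ⟨[u], rfl, List.isChain_singleton u, ?_, ?_, ?_⟩
      · simp only [List.head?_cons, Option.mem_some_iff]
        rintro x rfl; exact hup
      · simp only [List.getLast?_singleton, Option.mem_some_iff]
        rintro x rfl
        intro huq
        have := hC u
        rw [if_neg hup, if_pos huq] at this
        omega
      · intro i
        have hbu : b u = 1 := by
          have := hC u; rw [if_neg hup] at this; split_ifs at this <;> omega
        by_cases hiu : i = u
        · subst hiu; simp [hbu]
        · have := pair_bound u i (Ne.symm hiu)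
          have hbi : b i = 0 := by omega
          simp [List.count_singleton', hiu, Ne.symm hiu, hbi]
    -- inductive step
    · set b' : Fin k → ℕ := Function.update b u (b u - 1) with hb'
      have hsum' : ∑ i, b' i = n := by
        rw [hb', Finset.sum_update_of_mem (Finset.mem_univ u)]
        have := Finset.add_sum_erase Finset.univ b (Finset.mem_univ u)
        rw [hsum] at this
        rw [Finset.sdiff_singleton_eq_erase]
        omega
      have hC' : ∀ i, 2 * b' i + (if i = u then 1 else 0) + (if i = q then 1 else 0) ≤ n + 1 := by
        intro i
        by_cases hiu : i = u
        · subst hiu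
          rw [hb', Function.update_self, if_pos rfl]
          have := hC i
          rw [if_neg hup] at this
          omega
        · rw [hb', Function.update_of_ne hiu, if_neg hiu]
          have := hkey i hiu
          omega
      obtain ⟨L', hlen', hchain', hhead', hlast', hcount'⟩ := IH hn b' u q hsum' hC'
      have hL'ne : L' ≠ [] := by
        intro h; rw [h] at hlen'; simp at hlen'; omega
      refine ⟨u :: L', by simp [hlen'], ?_, ?_, ?_, ?_⟩
      · unfold List.Chain'; rw [List.isChain_cons]
        exact ⟨fun y hy => Ne.symm (hhead' y hy), hchain'⟩
      · simp only [List.head?_cons, Option.mem_some_iff]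
        rintro x rfl; exact hup
      · obtain ⟨y, L'', rfl⟩ := List.exists_cons_of_ne_nil hL'ne
        rw [List.getLast?_cons_cons]
        exact hlast'
      · intro i
        by_cases hiu : i = u
        · subst hiu
          rw [List.count_cons_self, hcount' i, hb', Function.update_self]
          omega
        · rw [List.count_cons_of_ne (Ne.symm hiu), hcount' i, hb', Function.update_of_ne hiu]

/-- If `0 ≤ aᵢ < ℓ/2` for all `i` and `ℓ = a₁ + ⋯ + a_k`, then for any `s, t ∈ [k]` there is a
string of length `ℓ` on the alphabet `x₁, …, x_k` with no two consecutive characters equal,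
first character not `x_s`, final character not `x_t`, and exactly `aᵢ` occurrences of `xᵢ`. -/
theorem stmt_1 (k ℓ : ℕ) (hk : 2 ≤ k) (a : Fin k → ℕ)
    (ha : ∀ i, 2 * a i < ℓ) (hsum : ∑ i, a i = ℓ) (s t : Fin k) :
    ∃ f : Fin ℓ → Fin k,
      (∀ i : ℕ, ∀ h : i + 1 < ℓ, f ⟨i, by omega⟩ ≠ f ⟨i + 1, h⟩) ∧
      (∀ h : 0 < ℓ, f ⟨0, h⟩ ≠ s ∧ f ⟨ℓ - 1, by omega⟩ ≠ t) ∧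
      (∀ i : Fin k, (Finset.univ.filter fun p => f p = i).card = a i) := by
  have hl : 1 ≤ ℓ := by have := ha s; omega
  obtain ⟨L, hlen, hchain, hhead, hlast, hcount⟩ :=
    key_lemma k ℓ hl a s t hsum (fun i => by have := ha i; split_ifs <;> omega)
  set v : List.Vector (Fin k) ℓ := ⟨L, hlen⟩ with hv
  refine ⟨v.get, ?_, ?_, ?_⟩
  · intro i h
    exact List.isChain_iff_getElem.mp hchain i (by omega)
  · intro h
    have hLne : L ≠ [] := by intro hh; rw [hh] at hlen; simp at hlen; omega
    constructor
    · have h1 : v.get ⟨0, h⟩ = L.head hLne := by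
        show L.get _ = _
        rw [← List.get_mk_zero (by omega : 0 < L.length)]
        rfl
      rw [h1]
      exact hhead _ (by rw [List.head?_eq_head hLne]; rfl)
    · have h2 : v.get ⟨ℓ - 1, by omega⟩ = L.getLast hLne := by
        show L.get _ = _
        rw [List.getLast_eq_getElem]
        congr 1
        simp [hlen]
      rw [h2]
      exact hlast _ (by rw [List.getLast?_eq_getLast hLne]; rfl)
  · intro i
    rw [Fin.card_filter_univ_eq_vector_get_eq_count]
    exact hcount i
end

section
/- Let G be the complete k-partite k-uniform hypergraph on vertex classes V_1, ..., V_k (edges are exactly the k-sets meeting each class in one vertex). Let b_1, ..., b_k be integers with 0 ≤ b_i ≤ |V_i|, suppose n := ((b_1 + ... + b_k) - 1)/(k-1) is an integer, and n/2 + 1 ≤ b_i ≤ n for all i. Then for any s, t ∈ [k], G contains a loose path with an initial vertex in V_s, a final vertex in V_t, and exactly b_i vertices in V_i for each i. -/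
lemma pair_le_sum {k : ℕ} (L : Fin k → ℕ) {i c : Fin k} (h : i ≠ c) :
    L i + L c ≤ ∑ j, L j := by
  rw [← Finset.add_sum_erase _ L (Finset.mem_univ c)]
  have hi : i ∈ Finset.univ.erase c := Finset.mem_erase.2 ⟨h, Finset.mem_univ i⟩
  have := Finset.single_le_sum (f := L) (fun j _ => Nat.zero_le _) hi
  omega

lemma greedy {k : ℕ} :
    ∀ (r : ℕ) (L : Fin k → ℕ) (s t : Fin k),
    (∑ i, L i) = r → (∀ i, 2 * L i ≤ r + 1) → 2 * L s ≤ r → 2 * L t ≤ r →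
    (s = t → 2 * L s + 1 ≤ r) →
    ∃ f : ℕ → Fin k,
      (∀ i, ((Finset.range r).filter fun j => f j = i).card = L i) ∧
      (∀ j, j + 1 < r → f j ≠ f (j + 1)) ∧
      (0 < r → f 0 ≠ s) ∧ (0 < r → f (r - 1) ≠ t) := by
  intro r
  induction r with
  | zero =>
    intro L s t hsum _ _ _ _
    refine ⟨fun _ => s, fun i => ?_, fun j hj => by omega, by omega, by omega⟩
    have := Finset.sum_eq_zero_iff.mp hsum i (Finset.mem_univ i)
    simp [this]
  | succ r' ih =>
    intro L s t hsum hall hs ht hst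
    -- choose c
    obtain ⟨c, hcs, hcpos, hcmax, hct, hcr1⟩ :
        ∃ c : Fin k, c ≠ s ∧ 1 ≤ L c ∧ (∀ i, i ≠ c → 2 * L i ≤ r' + 1) ∧
          (c = t ∨ 2 * L t ≤ r') ∧ (r' = 0 → c ≠ t) := by
      by_cases H1 : ∃ i, 2 * L i = r' + 2
      · obtain ⟨c, hc⟩ := H1
        have hmax : ∀ i, i ≠ c → 2 * L i ≤ r' + 1 := by
          intro i hi
          have := pair_le_sum L hi
          omega
        have hcs : c ≠ s := by rintro rfl; omega
        have hct' : c ≠ t := by rintro rfl; omega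
        have htr : 2 * L t ≤ r' := by
          rcases eq_or_ne t c with rfl | hne
          · omega
          · have := pair_le_sum L hne
            by_contra hh
            omega
        exact ⟨c, hcs, by omega, hmax, Or.inr htr, fun _ => hct'⟩
      · push_neg at H1
        have hmax' : ∀ i, 2 * L i ≤ r' + 1 := by
          intro i; have := hall i; have := H1 i; omega
        by_cases H2 : 2 * L t = r' + 1 ∧ t ≠ s
        · refine ⟨t, H2.2, by omega, fun i _ => hmax' i, Or.inl rfl, fun h0 => by omega⟩
        · -- pick any positive class ≠ s
          have hex : ∃ i, i ≠ s ∧ 1 ≤ L i := by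
            by_contra hno
            push_neg at hno
            have hzero : ∀ i ∈ Finset.univ.erase s, L i = 0 := by
              intro i hi
              have := hno i (Finset.mem_erase.1 hi).1
              omega
            have : ∑ i, L i = L s := by
              rw [← Finset.add_sum_erase _ L (Finset.mem_univ s),
                Finset.sum_eq_zero hzero]
              omega
            omega
          obtain ⟨c, hcs, hcpos⟩ := hex
          have htr : 2 * L t ≤ r' ∨ c = t := by
            by_cases hts : t = s
            · subst hts
              left
              have := hst rfl
              omega
            · have : ¬(2 * L t = r' + 1) := fun h => H2 ⟨h, hts⟩
              left; have := hmax' t; omega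
          refine ⟨c, hcs, hcpos, fun i _ => hmax' i, ?_, ?_⟩
          · rcases htr with h | h
            · exact Or.inr h
            · exact Or.inl h
          · intro h0
            subst h0
            rcases htr with h | h
            · intro hh; subst hh; omega
            · subst h
              intro _
              have := hmax' c
              omega
    set L' : Fin k → ℕ := fun i => if i = c then L i - 1 else L i with hL'
    have hLc : L' c = L c - 1 := by simp [hL']
    have hLne : ∀ i, i ≠ c → L' i = L i := by intro i hi; simp [hL', hi]
    have hsum' : ∑ i, L' i = r' := by
      have h1 := (Finset.add_sum_erase _ L (Finset.mem_univ c)).symm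
      have h2 := (Finset.add_sum_erase _ L' (Finset.mem_univ c)).symm
      have h3 : ∑ i ∈ Finset.univ.erase c, L' i = ∑ i ∈ Finset.univ.erase c, L i :=
        Finset.sum_congr rfl (fun i hi => hLne i (Finset.mem_erase.1 hi).1)
      rw [h3] at h2
      omega
    have hall' : ∀ i, 2 * L' i ≤ r' + 1 := by
      intro i
      by_cases hic : i = c
      · subst hic; have := hall i; omega
      · rw [hLne i hic]; exact hcmax i hic
    have hs' : 2 * L' c ≤ r' := by have := hall c; omega
    have ht' : 2 * L' t ≤ r' := by
      by_cases htc : t = c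
      · subst htc; have := hall t; omega
      · rw [hLne t htc]
        rcases hct with h | h
        · exact absurd h.symm htc
        · exact h
    have hst' : c = t → 2 * L' c + 1 ≤ r' := by
      intro h; subst h; have := ht; omega
    obtain ⟨g, hgc, hgadj, hg0, hglast⟩ := ih L' c t hsum' hall' hs' ht' hst'
    refine ⟨fun j => if j = 0 then c else g (j - 1), ?_, ?_, ?_, ?_⟩
    · intro i
      rw [Finset.card_filter, Finset.sum_range_succ']
      have e1 : ∑ j ∈ Finset.range r',
            (if (if j + 1 = 0 then c else g (j + 1 - 1)) = i then (1:ℕ) else 0)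
          = ∑ j ∈ Finset.range r', (if g j = i then (1:ℕ) else 0) :=
        Finset.sum_congr rfl (fun j _ => by norm_num)
      rw [e1, ← Finset.card_filter, hgc i]
      norm_num
      split_ifs with h
      · subst h; rw [hLc]; omega
      · rw [hLne i (fun hh => h hh.symm)]
        omega
    · intro j hj
      rcases Nat.eq_zero_or_pos j with rfl | hjpos
      · simp only [if_pos rfl, if_neg (Nat.one_ne_zero)]
        exact fun h => (hg0 (by omega)) (by simpa using h.symm)
      · show (if j = 0 then c else g (j - 1)) ≠ (if j + 1 = 0 then c else g (j + 1 - 1))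
        rw [if_neg (by omega : ¬ j = 0), if_neg (by omega : ¬ j + 1 = 0)]
        have hthis := hgadj (j - 1) (by omega)
        have hj1 : j - 1 + 1 = j := by omega
        rw [hj1] at hthis
        simpa using hthis
    · intro _
      simpa using hcs
    · intro _
      rcases Nat.eq_zero_or_pos r' with rfl | hr
      · simpa using hcr1 rfl
      · show (if r' + 1 - 1 = 0 then c else g (r' + 1 - 1 - 1)) ≠ t
        have h1 : r' + 1 - 1 = r' := rfl
        rw [h1, if_neg (by omega : ¬ r' = 0)]
        exact hglast hr

lemma list_map_getD_range {β : Type*} (l : List β) (d : β) :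
    (List.range l.length).map (fun q => l.getD q d) = l := by
  induction l with
  | nil => simp
  | cons a tl ih =>
    rw [List.length_cons, List.range_succ_eq_map, List.map_cons, List.map_map]
    simp only [List.getD_cons_zero]
    congr 1

lemma filter_range_add (a b : ℕ) (p : ℕ → Prop) [DecidablePred p] :
    ((Finset.range (a + b)).filter p).card
      = ((Finset.range a).filter p).card
        + ((Finset.range b).filter (fun x => p (a + x))).card := by
  induction b with
  | zero => simp
  | succ b ih =>
    rw [← Nat.add_assoc, Finset.range_add_one, Finset.filter_insert,
      Finset.range_add_one, Finset.filter_insert]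
    by_cases hp : p (a + b)
    · rw [if_pos hp, if_pos hp, Finset.card_insert_of_notMem (by simp),
        Finset.card_insert_of_notMem (by simp), ih]
      omega
    · rw [if_neg hp, if_neg hp, ih]

/-- Loose paths in complete `k`-partite `k`-graphs.  A loose path with `n` edges is given by an
injective sequence `p` of `n(k-1)+1` vertices whose `j`-th edge is the block of `k` consecutive
vertices starting at position `j(k-1)`; membership of each block in the complete `k`-partite
`k`-graph on classes `V₁, …, V_k` is expressed by each block meeting each class exactly once. -/
theorem stmt_2 {α : Type*} [DecidableEq α] (k : ℕ) (hk : 2 ≤ k)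
    (V : Fin k → Finset α) (hdisj : ∀ i j, i ≠ j → Disjoint (V i) (V j))
    (b : Fin k → ℕ) (hbV : ∀ i, b i ≤ (V i).card)
    (n : ℕ) (hn : ∑ i, b i = n * (k - 1) + 1)
    (hlow : ∀ i, n + 2 ≤ 2 * b i) (hup : ∀ i, b i ≤ n) (s t : Fin k) :
    ∃ p : ℕ → α, Set.InjOn p (Set.Iio (n * (k - 1) + 1)) ∧
      (∀ j < n, ∀ i : Fin k,
        (((Finset.range k).image fun r => p (j * (k - 1) + r)).filter (· ∈ V i)).card = 1) ∧
      (∀ i : Fin k,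
        ((Finset.range (n * (k - 1) + 1)).filter fun x => p x ∈ V i).card = b i) ∧
      (∃ j < k - 1, p j ∈ V s) ∧
      (∃ j, n * (k - 1) + 1 - (k - 1) ≤ j ∧ j < n * (k - 1) + 1 ∧ p j ∈ V t) := by
  classical
  have key : k * (n + 2) ≤ 2 * (n * (k - 1) + 1) := by
    calc k * (n + 2) = ∑ _i : Fin k, (n + 2) := by
          simp [Finset.sum_const, Finset.card_univ, mul_comm]
    _ ≤ ∑ i, 2 * b i := Finset.sum_le_sum (fun i _ => hlow i)
    _ = 2 * (n * (k - 1) + 1) := by rw [← Finset.mul_sum, hn]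
  have hk3 : 3 ≤ k := by
    rcases Nat.lt_or_ge k 3 with h | h
    · interval_cases k <;> omega
    · exact h
  have hmulnk : n * (k - 1) + n = n * k := by
    have hkk : k - 1 + 1 = k := by omega
    rw [← hkk, Nat.mul_succ, hkk]
  have hn3 : 3 ≤ n := by
    rcases Nat.lt_or_ge n 3 with h | h
    · interval_cases n <;> omega
    · exact h
  -- the deficiency counts
  set m : ℕ := n - 1 with hm
  set L : Fin k → ℕ := fun i => n - b i with hL
  have hsumL : ∑ i, L i = m := by
    have h1 : ∑ i, (L i + b i) = ∑ _i : Fin k, n :=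
      Finset.sum_congr rfl (fun i _ => by have := hup i; simp [hL]; omega)
    rw [Finset.sum_add_distrib, hn] at h1
    have h2 : ∑ _i : Fin k, n = k * n := by
      simp [Finset.sum_const, Finset.card_univ, mul_comm]
    rw [h2] at h1
    have h3 : n * (k - 1) + n = n * k := hmulnk
    have h4 : n * k = k * n := mul_comm n k
    omega
  have hLlow : ∀ i, 2 * L i + 1 ≤ m := by
    intro i
    have h1 := hlow i; have h2 := hup i
    simp only [hL, hm]
    omega
  obtain ⟨f, hfc, hfadj, hf0, hflast⟩ :=
    greedy m L s t hsumL (fun i => by have := hLlow i; omega)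
      (by have := hLlow s; omega) (by have := hLlow t; omega)
      (fun _ => by have := hLlow s; omega)
  -- the sequence of classes of the "head" positions
  set g : ℕ → Fin k := fun j => if j = 0 then s else if n ≤ j then t else f (j - 1) with hg
  have hg0 : g 0 = s := by simp [hg]
  have hgn : g n = t := by simp [hg]; omega
  have hgmid : ∀ j, 1 ≤ j → j < n → g j = f (j - 1) := by
    intro j h1 h2
    simp only [hg]
    rw [if_neg (by omega), if_neg (by omega)]
  have hgadj : ∀ j < n, g j ≠ g (j + 1) := by
    intro j hj
    rcases Nat.eq_zero_or_pos j with rfl | hjpos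
    · rw [hg0, hgmid 1 le_rfl (by omega)]
      exact fun h => hf0 (by omega) (by simp [← h])
    · rcases Nat.lt_or_ge (j + 1) n with h | h
      · rw [hgmid j hjpos (by omega), hgmid (j + 1) (by omega) h]
        have := hfadj (j - 1) (by omega)
        have hj1 : j - 1 + 1 = j := by omega
        rw [hj1] at this
        simpa using this
      · have hjn : j + 1 = n := by omega
        rw [hjn, hgn, hgmid j hjpos (by omega)]
        have := hflast (by omega)
        have : f (m - 1) ≠ t := this
        have hjm : j - 1 = m - 1 := by omega
        rw [hjm]
        exact this
  -- class assignment for every position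
  have hK : 1 ≤ k - 1 := by omega
  set c : ℕ → Fin k := fun x =>
    if x % (k - 1) = 0 then g (x / (k - 1))
    else (((List.finRange k).erase (g (x / (k - 1)))).erase (g (x / (k - 1) + 1))).getD
      (x % (k - 1) - 1) s with hc
  have harith : ∀ j r, r < k - 1 → (j * (k - 1) + r) % (k - 1) = r ∧ (j * (k - 1) + r) / (k - 1) = j := by
    intro j r hr
    have he : j * (k - 1) + r = r + (k - 1) * j := by ring
    constructor
    · rw [he, Nat.add_mul_mod_self_left, Nat.mod_eq_of_lt hr]
    · rw [he, Nat.add_mul_div_left r j (by omega), Nat.div_eq_of_lt hr]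
      omega
  have hchead : ∀ j, c (j * (k - 1)) = g j := by
    intro j
    have h := harith j 0 (by omega)
    simp only [Nat.add_zero] at h
    simp only [hc, h.1, h.2]
    norm_num
  have hcmid : ∀ j r, 1 ≤ r → r < k - 1 →
      c (j * (k - 1) + r)
        = (((List.finRange k).erase (g j)).erase (g (j + 1))).getD (r - 1) s := by
    intro j r h1 h2
    have h := harith j r h2
    simp only [hc, h.1, h.2, if_neg (by omega : ¬ r = 0)]
  -- the block lists
  have hmemE : ∀ j < n, g (j + 1) ∈ (List.finRange k).erase (g j) := by
    intro j hj
    exact (List.mem_erase_of_ne (Ne.symm (hgadj j hj))).2 (List.mem_finRange _)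
  have hlenE : ∀ j < n, (((List.finRange k).erase (g j)).erase (g (j + 1))).length = k - 2 := by
    intro j hj
    rw [List.length_erase, if_pos (hmemE j hj), List.length_erase,
      if_pos (List.mem_finRange _), List.length_finRange]
    omega
  have hperm : ∀ j < n,
      ((List.range k).map fun r => c (j * (k - 1) + r)).Perm (List.finRange k) := by
    intro j hj
    set E := ((List.finRange k).erase (g j)).erase (g (j + 1)) with hE
    have hklist : List.range k = List.range (k - 1) ++ [k - 1] := by
      rw [← List.range_succ]
      congr 1
      omega
    have hEgetD : (List.range (k - 2)).map (fun q => E.getD q s) = E := by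
      have hl := hlenE j hj
      rw [← hE] at hl
      have h2 : k - 2 = E.length := by omega
      rw [h2, list_map_getD_range]
    have hmapeq : ((List.range k).map fun r => c (j * (k - 1) + r))
        = (g j :: E) ++ [g (j + 1)] := by
      rw [hklist, List.map_append]
      congr 1
      · rw [show List.range (k - 1) = 0 :: (List.range (k - 2)).map Nat.succ from by
            rw [← List.range_succ_eq_map]; congr 1; omega]
        rw [List.map_cons, List.map_map]
        congr 1
        · simpa using hchead j
        · rw [← hEgetD]
          apply List.map_congr_left
          intro q hq
          have hq' : q < k - 2 := List.mem_range.mp hq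
          show c (j * (k - 1) + (q + 1)) = E.getD q s
          rw [hcmid j (q + 1) (by omega) (by omega)]
          norm_num
          rfl
      · simp only [List.map_cons, List.map_nil]
        congr 1
        have h3 : j * (k - 1) + (k - 1) = (j + 1) * (k - 1) := by ring
        rw [h3, hchead (j + 1)]
    have p1 : (List.finRange k).Perm (g j :: (List.finRange k).erase (g j)) :=
      List.perm_cons_erase (List.mem_finRange _)
    have p2 : ((List.finRange k).erase (g j)).Perm (g (j + 1) :: E) :=
      List.perm_cons_erase (hmemE j hj)
    rw [hmapeq]
    have q1 : ((g j :: E) ++ [g (j + 1)]).Perm (g (j + 1) :: g j :: E) :=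
      List.perm_append_singleton _ _
    have q2 : (g (j + 1) :: g j :: E).Perm (g j :: g (j + 1) :: E) :=
      List.Perm.swap _ _ _
    have q3 : (g j :: g (j + 1) :: E).Perm (g j :: (List.finRange k).erase (g j)) :=
      (p2.symm).cons _
    exact q1.trans (q2.trans (q3.trans p1.symm))
  -- unique class representative in each block
  have hblock : ∀ j < n, ∀ i : Fin k, ∃! r, r < k ∧ c (j * (k - 1) + r) = i := by
    intro j hj i
    have hp := hperm j hj
    have hnd : ((List.range k).map fun r => c (j * (k - 1) + r)).Nodup :=
      (hp.nodup_iff).2 (List.nodup_finRange k)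
    have hmem : i ∈ (List.range k).map fun r => c (j * (k - 1) + r) :=
      (hp.mem_iff).2 (List.mem_finRange i)
    obtain ⟨r, hr, hre⟩ := List.mem_map.1 hmem
    have hinj := List.inj_on_of_nodup_map hnd
    refine ⟨r, ⟨List.mem_range.mp hr, hre⟩, ?_⟩
    rintro r' ⟨hr', hre'⟩
    exact hinj (List.mem_range.2 hr') hr (hre'.trans hre.symm)
  have hcount : ∀ i : Fin k,
      ((Finset.range (n * (k - 1) + 1)).filter fun x => c x = i).card = b i := by
    intro i
    have claim : ∀ J, J ≤ n →
        ((Finset.range (J * (k - 1) + 1)).filter fun x => c x = i).card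
          + (∑ j ∈ Finset.range J, if g j = i then 1 else 0)
        = (if s = i then 1 else 0) + J := by
      intro J
      induction J with
      | zero =>
        intro _
        have hc0 : c 0 = s := by
          have := hchead 0
          simpa [hg0] using this
        simp only [Nat.zero_mul, Nat.zero_add, Finset.range_one,
          Finset.sum_range_zero, Nat.add_zero]
        rw [Finset.filter_singleton]
        simp only [hc0]
        by_cases h : s = i
        · rw [if_pos h, if_pos h]; simp
        · rw [if_neg h, if_neg h]; simp
      | succ J ih =>
        intro hJ
        have hJn : J < n := by omega
        have ih' := ih (by omega)
        have hsplit : (J + 1) * (k - 1) + 1 = (J * (k - 1) + 1) + (k - 1) := by ring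
        rw [hsplit, filter_range_add, Finset.sum_range_succ]
        have hblk : ((Finset.range (k - 1)).filter fun x => c (J * (k - 1) + 1 + x) = i).card
            + (if g J = i then 1 else 0) = 1 := by
          obtain ⟨r, ⟨hrk, hre⟩, hun⟩ := hblock J hJn i
          have hposx : ∀ x, J * (k - 1) + 1 + x = J * (k - 1) + (1 + x) := by
            intro x; omega
          by_cases hgi : g J = i
          · rw [if_pos hgi]
            have hr0 : r = 0 := by
              have h0 : (0 : ℕ) < k ∧ c (J * (k - 1) + 0) = i := by
                refine ⟨by omega, ?_⟩
                have := hchead J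
                simpa [hgi] using this
              exact (hun 0 h0).symm
            have hempty : ((Finset.range (k - 1)).filter fun x => c (J * (k - 1) + 1 + x) = i) = ∅ := by
              rw [Finset.filter_eq_empty_iff]
              intro x hx hcx
              have hx' : x < k - 1 := Finset.mem_range.1 hx
              have := hun (1 + x) ⟨by omega, by rw [← hposx x]; exact hcx⟩
              omega
            rw [hempty]
            simp
          · rw [if_neg hgi]
            have hr1 : 1 ≤ r := by
              rcases Nat.eq_zero_or_pos r with rfl | h
              · exfalso
                apply hgi
                have h2 : c (J * (k - 1)) = i := by simpa using hre
                exact (hchead J).symm.trans h2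
              · exact h
            have hsingle : ((Finset.range (k - 1)).filter fun x => c (J * (k - 1) + 1 + x) = i) = {r - 1} := by
              ext x
              simp only [Finset.mem_filter, Finset.mem_range, Finset.mem_singleton]
              constructor
              · rintro ⟨h1, h2⟩
                have := hun (1 + x) ⟨by omega, by rw [← hposx x]; exact h2⟩
                omega
              · rintro rfl
                refine ⟨by omega, ?_⟩
                rw [hposx]
                have h3 : 1 + (r - 1) = r := by omega
                rw [h3]
                exact hre
            rw [hsingle]
            simp
        omega
    have hfin := claim n le_rfl
    have hsum_g : (∑ j ∈ Finset.range n, if g j = i then 1 else 0)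
        = (if s = i then 1 else 0) + L i := by
      have hmn : m + 1 = n := by omega
      rw [← hmn, Finset.sum_range_succ']
      have h1 : ∀ j ∈ Finset.range m, (if g (j + 1) = i then (1:ℕ) else 0)
          = (if f j = i then 1 else 0) := by
        intro j hj
        have hjm : j < m := Finset.mem_range.1 hj
        rw [hgmid (j + 1) (by omega) (by omega)]
        norm_num
      rw [Finset.sum_congr rfl h1, hg0, ← Finset.card_filter, hfc i]
      omega
    have hLi : L i = n - b i := rfl
    have hbi := hup i
    omega
  -- choose actual vertices for the positions
  have hα : Nonempty α := by
    have h1 : 1 ≤ b s := by have := hlow s; omega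
    have h2 : 0 < (V s).card := by have := hbV s; omega
    obtain ⟨x, _⟩ := Finset.card_pos.1 h2
    exact ⟨x⟩
  obtain ⟨a₀⟩ := hα
  have hchoose : ∀ i : Fin k, ∃ φ : ℕ → α,
      (Set.InjOn φ ((Finset.range (n * (k - 1) + 1)).filter fun x => c x = i)) ∧
      ∀ x ∈ (Finset.range (n * (k - 1) + 1)).filter (fun x => c x = i), φ x ∈ V i := by
    intro i
    have hle : ((Finset.range (n * (k - 1) + 1)).filter fun x => c x = i).card ≤ (V i).card := by
      rw [hcount i]; exact hbV i
    obtain ⟨B, hBsub, hBcard⟩ := Finset.exists_subset_card_eq hle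
    have e := Finset.equivOfCardEq hBcard.symm
    refine ⟨fun x => if hx : x ∈ (Finset.range (n * (k - 1) + 1)).filter (fun x => c x = i)
      then (e ⟨x, hx⟩ : {y // y ∈ B}).1 else a₀, ?_, ?_⟩
    · intro x hx y hy heq
      have hx' : x ∈ (Finset.range (n * (k - 1) + 1)).filter (fun x => c x = i) := hx
      have hy' : y ∈ (Finset.range (n * (k - 1) + 1)).filter (fun x => c x = i) := hy
      simp only [dif_pos hx', dif_pos hy'] at heq
      have := e.injective (Subtype.ext heq)
      exact congrArg Subtype.val this
    · intro x hx
      simp only [dif_pos hx]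
      exact hBsub (e ⟨x, hx⟩).2
  choose φ hφinj hφmem using hchoose
  set p : ℕ → α := fun x => φ (c x) x with hp
  have hmemF : ∀ x, x < n * (k - 1) + 1 →
      x ∈ (Finset.range (n * (k - 1) + 1)).filter (fun y => c y = c x) := by
    intro x hx
    exact Finset.mem_filter.2 ⟨Finset.mem_range.2 hx, rfl⟩
  have hpV : ∀ x, x < n * (k - 1) + 1 → p x ∈ V (c x) := by
    intro x hx
    exact hφmem (c x) x (hmemF x hx)
  have hpVi : ∀ x, x < n * (k - 1) + 1 → ∀ i : Fin k, (p x ∈ V i ↔ c x = i) := by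
    intro x hx i
    constructor
    · intro hmem
      by_contra hne
      exact Finset.disjoint_left.mp (hdisj (c x) i hne) (hpV x hx) hmem
    · rintro rfl
      exact hpV x hx
  have hposlt : ∀ j < n, ∀ r < k, j * (k - 1) + r < n * (k - 1) + 1 := by
    intro j hj r hr
    have h1 : j * (k - 1) + (k - 1) ≤ n * (k - 1) := by
      have h2 : j + 1 ≤ n := hj
      calc j * (k - 1) + (k - 1) = (j + 1) * (k - 1) := by ring
      _ ≤ n * (k - 1) := Nat.mul_le_mul_right _ h2
    omega
  have hc0 : c 0 = s := by
    have := hchead 0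
    simpa [hg0] using this
  refine ⟨p, ?_, ?_, ?_, ?_, ?_⟩
  · -- injectivity
    intro x hx y hy heq
    have hx' : x < n * (k - 1) + 1 := hx
    have hy' : y < n * (k - 1) + 1 := hy
    have hcxy : c x = c y := by
      by_contra hne
      refine Finset.disjoint_left.mp (hdisj (c x) (c y) hne) (hpV x hx') ?_
      rw [heq]
      exact hpV y hy'
    have hx2 := hmemF x hx'
    have hy2 := hmemF y hy'
    rw [hcxy] at hx2
    refine hφinj (c y) (Finset.mem_coe.2 hx2) (Finset.mem_coe.2 hy2) ?_
    show φ (c y) x = φ (c y) y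
    have h3 : p x = φ (c y) x := by
      rw [hp]
      show φ (c x) x = φ (c y) x
      rw [hcxy]
    rw [← h3, heq]
  · -- rainbow blocks
    intro j hj i
    obtain ⟨r₀, ⟨hr₀k, hr₀c⟩, hun⟩ := hblock j hj i
    rw [Finset.card_eq_one]
    refine ⟨p (j * (k - 1) + r₀), ?_⟩
    ext y
    simp only [Finset.mem_filter, Finset.mem_image, Finset.mem_range, Finset.mem_singleton]
    constructor
    · rintro ⟨⟨r, hrk, rfl⟩, hyV⟩
      have h1 : c (j * (k - 1) + r) = i :=
        (hpVi _ (hposlt j hj r hrk) i).1 hyV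
      have h2 := hun r ⟨hrk, h1⟩
      rw [h2]
    · rintro rfl
      exact ⟨⟨r₀, hr₀k, rfl⟩, (hpVi _ (hposlt j hj r₀ hr₀k) i).2 hr₀c⟩
  · -- the class counts
    intro i
    have hfe : (Finset.range (n * (k - 1) + 1)).filter (fun x => p x ∈ V i)
        = (Finset.range (n * (k - 1) + 1)).filter (fun x => c x = i) := by
      apply Finset.filter_congr
      intro x hx
      have hx' : x < n * (k - 1) + 1 := Finset.mem_range.1 hx
      exact hpVi x hx' i
    rw [hfe, hcount i]
  · -- initial vertex in V s
    refine ⟨0, by omega, ?_⟩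
    exact (hpVi 0 (by omega) s).2 hc0
  · -- final vertex in V t
    refine ⟨n * (k - 1), by omega, by omega, ?_⟩
    have hcn : c (n * (k - 1)) = t := by
      rw [hchead n, hgn]
    exact (hpVi (n * (k - 1)) (by omega) t).2 hcn
end
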